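/- For every integer n ≥ 2 and every x, one has g_n(x) − (1/n)·x·g_n'(x) = h_n(x) and g_{n+1}(x) − (2/(n+1))·x·g_{n+1}'(x) = h_n(x). -/
import Mathlib


open Polynomial

/-- The polynomial `g_n(x) = Σ_{k=0}^{⌊n/2⌋} (n/(n−k))·binom(n−k, k)·x^k` over ℚ
for `n ≥ 1`, with `g_0 = 2`. -/
noncomputable def gP (n : ℕ) : Polynomial ℚ :=
  if n = 0 then C 2
  else ∑ k ∈ Finset.range (n / 2 + 1),
    C ((n : ℚ) / ((n : ℚ) - (k : ℚ)) * (((n - k).choose k : ℕ) : ℚ)) * X ^ k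

/-- The polynomial `h_n(x) = Σ_{k=0}^{⌊n/2⌋} binom(n−k, k)·x^k` over ℚ. -/
noncomputable def hP (n : ℕ) : Polynomial ℚ :=
  ∑ k ∈ Finset.range (n / 2 + 1), C (((n - k).choose k : ℕ) : ℚ) * X ^ k

lemma main_eval (a b : ℕ → ℚ) (c : ℚ) (m : ℕ) (x : ℚ)
    (h : ∀ k ∈ Finset.range m, a k * (1 - c * k) = b k) :
    eval x (∑ k ∈ Finset.range m, C (a k) * X ^ k)
      - c * x * eval x (derivative (∑ k ∈ Finset.range m, C (a k) * X ^ k))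
    = eval x (∑ k ∈ Finset.range m, C (b k) * X ^ k) := by
  simp only [derivative_sum, derivative_C_mul_X_pow, eval_finset_sum, eval_mul, eval_C,
    eval_pow, eval_X]
  rw [Finset.mul_sum, ← Finset.sum_sub_distrib]
  refine Finset.sum_congr rfl fun k hk => ?_
  have hb := h k hk
  cases k with
  | zero => simpa using hb
  | succ j =>
    simp only [Nat.add_sub_cancel, pow_succ]
    push_cast at hb ⊢
    linear_combination (x ^ j * x) * hb

theorem g_minus_euler_eq_h (n : ℕ) (hn : 2 ≤ n) (x : ℚ) :
    (gP n).eval x - (1 / (n : ℚ)) * x * (derivative (gP n)).eval x = (hP n).eval x ∧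
    (gP (n + 1)).eval x - (2 / ((n : ℚ) + 1)) * x * (derivative (gP (n + 1))).eval x
      = (hP n).eval x := by
  have hn0 : n ≠ 0 := by omega
  have hnQ : (n : ℚ) ≠ 0 := by exact_mod_cast hn0
  constructor
  · rw [gP, if_neg hn0, hP]
    refine main_eval _ _ _ _ _ fun k hk => ?_
    rw [Finset.mem_range] at hk
    have hkn : k < n := by omega
    have hknQ : (n : ℚ) - (k : ℚ) ≠ 0 := by
      have : (k : ℚ) < (n : ℚ) := by exact_mod_cast hkn
      linarith
    field_simp
  · have hn1 : n + 1 ≠ 0 := by omega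
    have hrange : (hP n).eval x
        = eval x (∑ k ∈ Finset.range ((n + 1) / 2 + 1),
            C (((n - k).choose k : ℕ) : ℚ) * X ^ k) := by
      rw [hP]
      congr 1
      refine Finset.sum_subset ?_ ?_
      · intro k hk
        rw [Finset.mem_range] at *
        omega
      · intro k hk hk'
        rw [Finset.mem_range] at *
        have : n - k < k := by omega
        rw [Nat.choose_eq_zero_of_lt this]
        simp
    rw [hrange, gP, if_neg hn1]
    refine main_eval _ _ _ _ _ fun k hk => ?_
    rw [Finset.mem_range] at hk
    have h2k : 2 * k ≤ n + 1 := by omega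
    have hkn : k < n + 1 := by omega
    have hden : ((n + 1 : ℕ) : ℚ) - (k : ℚ) ≠ 0 := by
      have : (k : ℚ) < ((n + 1 : ℕ) : ℚ) := by exact_mod_cast hkn
      linarith
    have hden2 : ((n : ℚ) + 1) ≠ 0 := by positivity
    have hnat : (n - k).choose k * (n + 1 - k) = (n + 1 - k).choose k * (n + 1 - 2 * k) := by
      have h := Nat.choose_mul_succ_eq (n - k) k
      have e1 : n - k + 1 = n + 1 - k := by omega
      rw [e1] at h
      have e2 : n + 1 - k - k = n + 1 - 2 * k := by omega
      rw [e2] at h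
      exact h
    have hcast : (((n - k).choose k : ℕ) : ℚ) * ((n : ℚ) + 1 - (k : ℚ))
        = (((n + 1 - k).choose k : ℕ) : ℚ) * ((n : ℚ) + 1 - 2 * (k : ℚ)) := by
      have h := congrArg (fun m : ℕ => (m : ℚ)) hnat
      push_cast [Nat.cast_sub (show k ≤ n + 1 by omega),
        Nat.cast_sub (show 2 * k ≤ n + 1 by omega)] at h
      linear_combination h
    push_cast at hden hcast ⊢
    field_simp
    nlinarith [hcast]
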